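/- The integral ∫_{(0,t]} ∫_{ℝ^d} ∫_{(0,∞)} min(1, p_s(y)·z) λ(dz) dy ds is finite if and only if both ∫_{(0,1]} z λ(dz) < ∞ and ∫_{(1,∞)} z^{d/(d+α)} λ(dz) < ∞. -/

import Mathlib

open MeasureTheory Set Filter Topology
open scoped ENNReal NNReal

open Metric

lemma aux_Ibeta {β : ℝ} (hβ : β < 1) :
    (∫⁻ u in Set.Ioc (0:ℝ) 1, ENNReal.ofReal (u ^ (-β))) < ⊤ := by
  have h : IntegrableOn (fun u : ℝ => u ^ (-β)) (Set.Ioc 0 1) volume :=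
    (intervalIntegrable_iff_integrableOn_Ioc_of_le zero_le_one).mp
      (intervalIntegral.intervalIntegrable_rpow' (by linarith))
  exact h.lintegral_lt_top

lemma aux_ball_lower (d : ℕ) (hd : 1 ≤ d) (r : ℝ) (hr : 0 ≤ r)
    (f : EuclideanSpace ℝ (Fin d) → ℝ≥0∞)
    (hf : ∀ y : EuclideanSpace ℝ (Fin d), y ≠ 0 → ‖y‖ < r → 1 ≤ f y) :
    ENNReal.ofReal (r ^ (d : ℕ)) * volume (ball (0 : EuclideanSpace ℝ (Fin d)) 1)
      ≤ ∫⁻ y, f y := by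
  haveI : Nonempty (Fin d) := ⟨⟨0, hd⟩⟩
  have hball : volume (ball (0 : EuclideanSpace ℝ (Fin d)) r)
      = ENNReal.ofReal (r ^ (d : ℕ)) * volume (ball (0 : EuclideanSpace ℝ (Fin d)) 1) := by
    rw [MeasureTheory.Measure.addHaar_ball (μ := volume) 0 hr, finrank_euclideanSpace_fin]
  calc ENNReal.ofReal (r ^ (d : ℕ)) * volume (ball (0 : EuclideanSpace ℝ (Fin d)) 1)
      = volume (ball (0 : EuclideanSpace ℝ (Fin d)) r) := hball.symm
    _ = volume (ball (0 : EuclideanSpace ℝ (Fin d)) r \ {0}) :=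
        (measure_diff_null (measure_singleton 0)).symm
    _ = ∫⁻ y, (ball (0 : EuclideanSpace ℝ (Fin d)) r \ {0}).indicator 1 y :=
        (lintegral_indicator_one (measurableSet_ball.diff (measurableSet_singleton _))).symm
    _ ≤ ∫⁻ y, f y := by
        refine lintegral_mono fun y => ?_
        by_cases hy : y ∈ ball (0 : EuclideanSpace ℝ (Fin d)) r \ {0}
        · rw [Set.indicator_of_mem hy]
          exact hf y hy.2 (by simpa [mem_ball_zero_iff] using hy.1)
        · rw [Set.indicator_of_notMem hy]; exact zero_le

lemma aux_layercake (d : ℕ) (hd : 1 ≤ d) (γ : ℝ) (hγ : (d : ℝ) < γ) (M : ℝ) (hM : 0 < M) :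
    ∫⁻ y : EuclideanSpace ℝ (Fin d), ENNReal.ofReal (min 1 (M * ‖y‖ ^ (-γ))) ≤
      ENNReal.ofReal (M ^ ((d : ℝ) / γ)) *
        ((∫⁻ u in Set.Ioc (0:ℝ) 1, ENNReal.ofReal (u ^ (-((d : ℝ) / γ)))) *
          volume (ball (0 : EuclideanSpace ℝ (Fin d)) 1)) := by
  classical
  haveI : Nonempty (Fin d) := ⟨⟨0, hd⟩⟩
  have hd0 : (0:ℝ) < d := by exact_mod_cast hd
  have hγ0 : (0:ℝ) < γ := hd0.trans hγ
  have hγne : -γ ≠ 0 := neg_ne_zero.mpr hγ0.ne'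
  set β : ℝ := (d : ℝ) / γ with hβ
  have hβ0 : 0 < β := div_pos hd0 hγ0
  have hβ1 : β < 1 := (div_lt_one hγ0).2 hγ
  set v := volume (ball (0 : EuclideanSpace ℝ (Fin d)) 1) with hv
  have hvne : v ≠ ⊤ := measure_ball_lt_top.ne
  -- measurability
  have hmble : Measurable fun y : EuclideanSpace ℝ (Fin d) => min 1 (M * ‖y‖ ^ (-γ)) := by
    have hfe : (fun y : EuclideanSpace ℝ (Fin d) => min 1 (M * ‖y‖ ^ (-γ)))
        = fun y => if y = 0 then 0 else min 1 (M * Real.exp (Real.log ‖y‖ * (-γ))) := by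
      funext y
      by_cases hy : y = 0
      · rw [if_pos hy, hy]
        rw [norm_zero, Real.zero_rpow hγne, mul_zero, min_eq_right zero_le_one]
      · rw [if_neg hy, Real.rpow_def_of_pos (norm_pos_iff.mpr hy)]
    rw [hfe]
    refine Measurable.ite (MeasurableSet.singleton 0) measurable_const ?_
    exact measurable_const.min (measurable_const.mul
      (Real.measurable_exp.comp ((Real.measurable_log.comp measurable_norm).mul_const _)))
  have h_nn : (0 : EuclideanSpace ℝ (Fin d) → ℝ) ≤ᵐ[volume]
      fun y => min 1 (M * ‖y‖ ^ (-γ)) :=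
    Filter.Eventually.of_forall fun y => le_min zero_le_one (by positivity)
  rw [lintegral_eq_lintegral_meas_lt volume h_nn hmble.aemeasurable]
  have hbound : ∀ u ∈ Set.Ioi (0:ℝ),
      volume {y : EuclideanSpace ℝ (Fin d) | u < min 1 (M * ‖y‖ ^ (-γ))} ≤
        (Set.Ioc (0:ℝ) 1).indicator (fun u => ENNReal.ofReal ((M / u) ^ β) * v) u := by
    intro u hu
    have hu0 : (0:ℝ) < u := hu
    by_cases hu1 : u ≤ 1
    · rw [Set.indicator_of_mem (Set.mem_Ioc.mpr ⟨hu0, hu1⟩)]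
      have hMu : 0 < M / u := div_pos hM hu0
      have hsub : {y : EuclideanSpace ℝ (Fin d) | u < min 1 (M * ‖y‖ ^ (-γ))} ⊆
          ball (0 : EuclideanSpace ℝ (Fin d)) ((M / u) ^ (1 / γ)) := by
        intro y hy
        have hy2 : u < M * ‖y‖ ^ (-γ) := lt_of_lt_of_le hy (min_le_right _ _)
        by_cases h0 : y = 0
        · exfalso
          rw [h0, norm_zero, Real.zero_rpow hγne, mul_zero] at hy2
          linarith
        · have hny : (0:ℝ) < ‖y‖ := norm_pos_iff.mpr h0
          have hnpos : (0:ℝ) < ‖y‖ ^ γ := Real.rpow_pos_of_pos hny γ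
          have h3 : u < M / ‖y‖ ^ γ := by
            rwa [Real.rpow_neg hny.le, ← div_eq_mul_inv] at hy2
          have h4 : ‖y‖ ^ γ < M / u := by
            rw [lt_div_iff₀ hu0]
            calc ‖y‖ ^ γ * u = u * ‖y‖ ^ γ := mul_comm _ _
              _ < M := (lt_div_iff₀ hnpos).1 h3
          have h5 : (‖y‖ ^ γ) ^ (1/γ) < (M / u) ^ (1/γ) :=
            Real.rpow_lt_rpow (Real.rpow_nonneg hny.le _) h4 (by positivity)
          have h6 : (‖y‖ ^ γ) ^ (1/γ) = ‖y‖ := by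
            rw [← Real.rpow_mul (norm_nonneg y), mul_one_div_cancel hγ0.ne', Real.rpow_one]
          rw [mem_ball_zero_iff]
          rw [h6] at h5
          exact h5
      calc volume {y : EuclideanSpace ℝ (Fin d) | u < min 1 (M * ‖y‖ ^ (-γ))}
          ≤ volume (ball (0 : EuclideanSpace ℝ (Fin d)) ((M / u) ^ (1 / γ))) :=
            measure_mono hsub
        _ = ENNReal.ofReal (((M / u) ^ (1 / γ)) ^ (d : ℕ)) * v := by
            rw [MeasureTheory.Measure.addHaar_ball (μ := volume) 0
              (Real.rpow_nonneg hMu.le _), finrank_euclideanSpace_fin]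
        _ = ENNReal.ofReal ((M / u) ^ β) * v := by
            congr 2
            rw [← Real.rpow_natCast ((M / u) ^ (1 / γ)) d, ← Real.rpow_mul hMu.le]
            congr 1
            rw [hβ, one_div, inv_mul_eq_div]
    · rw [Set.indicator_of_notMem (fun h => hu1 h.2)]
      have hempty : {y : EuclideanSpace ℝ (Fin d) | u < min 1 (M * ‖y‖ ^ (-γ))}
          = (∅ : Set (EuclideanSpace ℝ (Fin d))) := by
        refine Set.eq_empty_iff_forall_notMem.mpr fun y hy => ?_
        have h1 : u < 1 := lt_of_lt_of_le hy (min_le_left _ _)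
        exact hu1 h1.le
      rw [hempty, measure_empty]
  calc (∫⁻ u in Set.Ioi (0:ℝ),
        volume {y : EuclideanSpace ℝ (Fin d) | u < min 1 (M * ‖y‖ ^ (-γ))})
      ≤ ∫⁻ u in Set.Ioi (0:ℝ),
          (Set.Ioc (0:ℝ) 1).indicator (fun u => ENNReal.ofReal ((M / u) ^ β) * v) u :=
        setLIntegral_mono' measurableSet_Ioi hbound
    _ = ∫⁻ u in Set.Ioc (0:ℝ) 1, ENNReal.ofReal ((M / u) ^ β) * v := by
        rw [lintegral_indicator measurableSet_Ioc, Measure.restrict_restrict measurableSet_Ioc,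
          Set.inter_eq_left.mpr Set.Ioc_subset_Ioi_self]
    _ = ∫⁻ u in Set.Ioc (0:ℝ) 1,
          ENNReal.ofReal (M ^ β) * (ENNReal.ofReal (u ^ (-β)) * v) := by
        refine setLIntegral_congr_fun measurableSet_Ioc (fun u hu => ?_)
        rw [Real.div_rpow hM.le hu.1.le, Real.rpow_neg hu.1.le, div_eq_mul_inv,
          ENNReal.ofReal_mul (Real.rpow_nonneg hM.le _), mul_assoc]
    _ = ENNReal.ofReal (M ^ β) *
          ((∫⁻ u in Set.Ioc (0:ℝ) 1, ENNReal.ofReal (u ^ (-β))) * v) := by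
        rw [lintegral_const_mul' _ _ ENNReal.ofReal_ne_top,
          lintegral_mul_const' v _ hvne]

/-- The heat-kernel profile `p_s(y) = s^{-d/α} g(|y|/s^{1/α})`. -/
noncomputable def pker (d : ℕ) (α : ℝ) (g : ℝ → ℝ) (s : ℝ)
    (y : EuclideanSpace ℝ (Fin d)) : ℝ :=
  s ^ (-((d : ℝ) / α)) * g (‖y‖ / s ^ ((1 : ℝ) / α))

theorem stmt18 (d : ℕ) (hd : 1 ≤ d) (α : ℝ) (hα : α ∈ Set.Ioo (0:ℝ) 2) (t : ℝ) (ht : 0 < t)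
    (lam : MeasureTheory.Measure ℝ) [SigmaFinite lam]
    (hlam0 : lam (Set.Iic 0) = 0) (hlam_ne : lam ≠ 0)
    (hmom : ∫⁻ z in Set.Ioi (0:ℝ), ENNReal.ofReal (min 1 (z ^ 2)) ∂lam ≠ ⊤)
    (g : ℝ → ℝ) (hg_cont : ContinuousOn g (Set.Ici 0))
    (hg_anti : StrictAntiOn g (Set.Ici 0)) (hg_pos : ∀ x : ℝ, 0 ≤ x → 0 < g x)
    (c₀ : ℝ) (hc₀ : 0 < c₀)
    (hg_tail : Filter.Tendsto (fun r : ℝ => r ^ ((d:ℝ) + α) * g r) Filter.atTop (nhds c₀))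
    (hnorm : ∀ s : ℝ, 0 < s →
      ∫⁻ y : EuclideanSpace ℝ (Fin d), ENNReal.ofReal (pker d α g s y) = 1) :
    (∫⁻ s in Set.Ioc (0:ℝ) t, ∫⁻ y : EuclideanSpace ℝ (Fin d), ∫⁻ z in Set.Ioi (0:ℝ),
        ENNReal.ofReal (min 1 (pker d α g s y * z)) ∂lam) < ⊤ ↔
      (∫⁻ z in Set.Ioc (0:ℝ) 1, ENNReal.ofReal z ∂lam < ⊤ ∧
        ∫⁻ z in Set.Ioi (1:ℝ), ENNReal.ofReal (z ^ ((d:ℝ) / ((d:ℝ) + α))) ∂lam < ⊤) := by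
  classical
  obtain ⟨hα0, hα2⟩ := hα
  haveI : Nonempty (Fin d) := ⟨⟨0, hd⟩⟩
  have hd0 : (0:ℝ) < d := by exact_mod_cast hd
  set γ : ℝ := (d:ℝ) + α with hγdef
  have hγ0 : 0 < γ := add_pos hd0 hα0
  have hdγ : (d:ℝ) < γ := lt_add_of_pos_right _ hα0
  set β : ℝ := (d:ℝ)/γ with hβdef
  have hβ0 : 0 < β := div_pos hd0 hγ0
  have hβ1 : β < 1 := (div_lt_one hγ0).2 hdγ
  set v := volume (ball (0 : EuclideanSpace ℝ (Fin d)) 1) with hv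
  have hv0 : v ≠ 0 := (measure_ball_pos _ _ one_pos).ne'
  have hvt : v ≠ ⊤ := measure_ball_lt_top.ne
  set Iβ := ∫⁻ u in Set.Ioc (0:ℝ) 1, ENNReal.ofReal (u ^ (-β)) with hIβ
  have hIβt : Iβ ≠ ⊤ := (aux_Ibeta hβ1).ne
  -- continuous extension of g
  set G : ℝ → ℝ := fun r => g (max r 0) with hGdef
  have hG_cont : Continuous G :=
    hg_cont.comp_continuous (continuous_id.max continuous_const)
      (fun x => Set.mem_Ici.mpr (le_max_right _ _))
  have hG_eq : ∀ r : ℝ, 0 ≤ r → G r = g r := by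
    intro r hr; rw [hGdef]; simp only [max_eq_left hr]
  -- tail bounds on g
  obtain ⟨R₀, hR₀1, hR₀⟩ : ∃ R₀ : ℝ, 1 ≤ R₀ ∧
      ∀ r, R₀ ≤ r → c₀/2 ≤ r ^ γ * g r ∧ r ^ γ * g r ≤ 2*c₀ := by
    have h1 : ∀ᶠ r in atTop, r ^ γ * g r ∈ Set.Ioo (c₀/2) (2*c₀) :=
      hg_tail.eventually (Ioo_mem_nhds (by linarith) (by linarith))
    obtain ⟨a, ha⟩ := eventually_atTop.mp h1
    refine ⟨max a 1, le_max_right _ _, fun r hr => ?_⟩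
    have h2 := ha r (le_trans (le_max_left _ _) hr)
    exact ⟨h2.1.le, h2.2.le⟩
  have hR₀0 : (0:ℝ) < R₀ := lt_of_lt_of_le one_pos hR₀1
  have hgR₀ : 0 < g R₀ := hg_pos _ hR₀0.le
  have hg0 : 0 < g 0 := hg_pos 0 le_rfl
  set C : ℝ := max (2*c₀) (g 0 * R₀ ^ γ) with hCdef
  have hC0 : 0 < C := lt_max_of_lt_left (by linarith)
  set c : ℝ := min (g R₀) (c₀/2) with hcdef
  have hc0 : 0 < c := lt_min hgR₀ (by linarith)
  -- pointwise bounds on g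
  have hUpperG : ∀ r : ℝ, 0 < r → g r ≤ C * r ^ (-γ) := by
    intro r hr
    have hrγ : 0 < r ^ γ := Real.rpow_pos_of_pos hr γ
    rw [Real.rpow_neg hr.le, ← div_eq_mul_inv, le_div_iff₀ hrγ]
    rcases le_or_gt R₀ r with h | h
    · calc g r * r ^ γ = r ^ γ * g r := mul_comm _ _
        _ ≤ 2*c₀ := (hR₀ r h).2
        _ ≤ C := le_max_left _ _
    · have hgle : g r ≤ g 0 := by
        rcases eq_or_lt_of_le hr.le with h0 | h0
        · rw [← h0]
        · exact (hg_anti Set.self_mem_Ici (Set.mem_Ici.mpr hr.le) h0).le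
      have hrγle : r ^ γ ≤ R₀ ^ γ := Real.rpow_le_rpow hr.le h.le hγ0.le
      calc g r * r ^ γ ≤ g 0 * R₀ ^ γ := mul_le_mul hgle hrγle hrγ.le hg0.le
        _ ≤ C := le_max_right _ _
  have hLowerG : ∀ r : ℝ, 0 < r → c * min 1 (r ^ (-γ)) ≤ g r := by
    intro r hr
    rcases le_or_gt r R₀ with h | h
    · have h1 : g R₀ ≤ g r := by
        rcases eq_or_lt_of_le h with h0 | h0
        · rw [h0]
        · exact (hg_anti (Set.mem_Ici.mpr hr.le) (Set.mem_Ici.mpr hR₀0.le) h0).le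
      calc c * min 1 (r ^ (-γ)) ≤ c * 1 :=
            mul_le_mul_of_nonneg_left (min_le_left _ _) hc0.le
        _ = c := mul_one c
        _ ≤ g R₀ := min_le_left _ _
        _ ≤ g r := h1
    · have hr1 : (1:ℝ) ≤ r := le_trans hR₀1 h.le
      have h2 : min 1 (r ^ (-γ)) = r ^ (-γ) :=
        min_eq_right (Real.rpow_le_one_of_one_le_of_nonpos hr1 (by linarith))
      rw [h2]
      have hrγ : 0 < r ^ γ := Real.rpow_pos_of_pos hr γ
      have h3 := (hR₀ r h.le).1
      calc c * r ^ (-γ) ≤ (c₀/2) * r ^ (-γ) :=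
            mul_le_mul_of_nonneg_right (min_le_right _ _) (Real.rpow_nonneg hr.le _)
        _ ≤ g r := by
            rw [Real.rpow_neg hr.le, ← div_eq_mul_inv, div_le_iff₀ hrγ]
            calc c₀/2 ≤ r ^ γ * g r := h3
              _ = g r * r ^ γ := mul_comm _ _
  -- kernel facts
  have hexp1 : -((d:ℝ)/α) + γ/α = 1 := by
    rw [hγdef]; field_simp; ring
  have hp_pos : ∀ s : ℝ, 0 < s → ∀ y : EuclideanSpace ℝ (Fin d), 0 < pker d α g s y := by
    intro s hs y
    have hsα : 0 < s ^ ((1:ℝ)/α) := Real.rpow_pos_of_pos hs _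
    exact mul_pos (Real.rpow_pos_of_pos hs _)
      (hg_pos _ (div_nonneg (norm_nonneg _) hsα.le))
  have hu_rw : ∀ s : ℝ, 0 < s → ∀ y : EuclideanSpace ℝ (Fin d), y ≠ 0 →
      (‖y‖ / s ^ ((1:ℝ)/α)) ^ (-γ) = ‖y‖ ^ (-γ) * s ^ (γ/α) := by
    intro s hs y hy
    have hsα : 0 < s ^ ((1:ℝ)/α) := Real.rpow_pos_of_pos hs _
    rw [Real.div_rpow (norm_nonneg y) hsα.le, ← Real.rpow_mul hs.le, div_eq_mul_inv,
      ← Real.rpow_neg hs.le]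
    congr 1
    ring
  have hs_comb : ∀ s : ℝ, 0 < s → s ^ (-((d:ℝ)/α)) * s ^ (γ/α) = s := by
    intro s hs
    rw [← Real.rpow_add hs, hexp1, Real.rpow_one]
  have hp_upper : ∀ s : ℝ, 0 < s → ∀ y : EuclideanSpace ℝ (Fin d), y ≠ 0 →
      pker d α g s y ≤ C * s * ‖y‖ ^ (-γ) := by
    intro s hs y hy
    have hsα : 0 < s ^ ((1:ℝ)/α) := Real.rpow_pos_of_pos hs _
    have hsp : 0 < s ^ (-((d:ℝ)/α)) := Real.rpow_pos_of_pos hs _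
    have hu0 : 0 < ‖y‖ / s ^ ((1:ℝ)/α) := div_pos (norm_pos_iff.mpr hy) hsα
    have h2 := hUpperG _ hu0
    calc pker d α g s y = s ^ (-((d:ℝ)/α)) * g (‖y‖ / s ^ ((1:ℝ)/α)) := rfl
      _ ≤ s ^ (-((d:ℝ)/α)) * (C * (‖y‖ / s ^ ((1:ℝ)/α)) ^ (-γ)) :=
          mul_le_mul_of_nonneg_left h2 hsp.le
      _ = C * (s ^ (-((d:ℝ)/α)) * s ^ (γ/α)) * ‖y‖ ^ (-γ) := by
          rw [hu_rw s hs y hy]; ring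
      _ = C * s * ‖y‖ ^ (-γ) := by rw [hs_comb s hs]
  have hp_lower : ∀ s : ℝ, 0 < s → ∀ y : EuclideanSpace ℝ (Fin d), y ≠ 0 →
      c * min (s ^ (-((d:ℝ)/α))) (s * ‖y‖ ^ (-γ)) ≤ pker d α g s y := by
    intro s hs y hy
    have hsα : 0 < s ^ ((1:ℝ)/α) := Real.rpow_pos_of_pos hs _
    have hsp : 0 < s ^ (-((d:ℝ)/α)) := Real.rpow_pos_of_pos hs _
    have hu0 : 0 < ‖y‖ / s ^ ((1:ℝ)/α) := div_pos (norm_pos_iff.mpr hy) hsα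
    have hmin : s ^ (-((d:ℝ)/α)) * min 1 ((‖y‖ / s ^ ((1:ℝ)/α)) ^ (-γ))
        = min (s ^ (-((d:ℝ)/α))) (s * ‖y‖ ^ (-γ)) := by
      rw [mul_min_of_nonneg _ _ hsp.le, mul_one, hu_rw s hs y hy]
      congr 1
      calc s ^ (-((d:ℝ)/α)) * (‖y‖ ^ (-γ) * s ^ (γ/α))
          = (s ^ (-((d:ℝ)/α)) * s ^ (γ/α)) * ‖y‖ ^ (-γ) := by ring
        _ = s * ‖y‖ ^ (-γ) := by rw [hs_comb s hs]
    calc c * min (s ^ (-((d:ℝ)/α))) (s * ‖y‖ ^ (-γ))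
        = s ^ (-((d:ℝ)/α)) * (c * min 1 ((‖y‖ / s ^ ((1:ℝ)/α)) ^ (-γ))) := by
          rw [← hmin]; ring
      _ ≤ s ^ (-((d:ℝ)/α)) * g (‖y‖ / s ^ ((1:ℝ)/α)) :=
          mul_le_mul_of_nonneg_left (hLowerG _ hu0) hsp.le
      _ = pker d α g s y := rfl

  -- measurable version of the kernel integrand
  set qf : ℝ → EuclideanSpace ℝ (Fin d) → ℝ → ℝ≥0∞ := fun s y z =>
    ENNReal.ofReal (min 1 (Real.exp (Real.log s * (-((d:ℝ)/α))) *
      G (‖y‖ * Real.exp (Real.log s * (-((1:ℝ)/α)))) * z)) with hqf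
  have hpq : ∀ s : ℝ, 0 < s → ∀ (y : EuclideanSpace ℝ (Fin d)) (z : ℝ),
      ENNReal.ofReal (min 1 (pker d α g s y * z)) = qf s y z := by
    intro s hs y z
    have hsα : 0 < s ^ ((1:ℝ)/α) := Real.rpow_pos_of_pos hs _
    have h1 : Real.exp (Real.log s * (-((1:ℝ)/α))) = (s ^ ((1:ℝ)/α))⁻¹ := by
      rw [← Real.rpow_def_of_pos hs, Real.rpow_neg hs.le]
    have h2 : ‖y‖ * Real.exp (Real.log s * (-((1:ℝ)/α))) = ‖y‖ / s ^ ((1:ℝ)/α) := by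
      rw [h1]; exact (div_eq_mul_inv _ _).symm
    rw [hqf]
    simp only
    rw [h2, hG_eq _ (div_nonneg (norm_nonneg y) hsα.le), ← Real.rpow_def_of_pos hs]
    rfl
  have hq_meas : Measurable (fun p : (ℝ × ℝ) × EuclideanSpace ℝ (Fin d) =>
      qf p.1.1 p.2 p.1.2) := by
    apply Measurable.ennreal_ofReal
    apply Measurable.min measurable_const
    apply Measurable.mul
    apply Measurable.mul
    · exact Real.measurable_exp.comp
        ((Real.measurable_log.comp (measurable_fst.comp measurable_fst)).mul_const _)
    · exact hG_cont.measurable.comp ((measurable_norm.comp measurable_snd).mul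
        (Real.measurable_exp.comp
          ((Real.measurable_log.comp (measurable_fst.comp measurable_fst)).mul_const _)))
    · exact measurable_snd.comp measurable_fst
  have hq_meas_s : ∀ s : ℝ, Measurable (fun p : EuclideanSpace ℝ (Fin d) × ℝ =>
      qf s p.1 p.2) := by
    intro s
    apply Measurable.ennreal_ofReal
    apply Measurable.min measurable_const
    apply Measurable.mul
    apply Measurable.mul
    · exact measurable_const
    · exact hG_cont.measurable.comp ((measurable_norm.comp measurable_fst).mul_const _)
    · exact measurable_snd
  set Kp : ℝ → ℝ≥0∞ := fun z => ∫⁻ s in Set.Ioc (0:ℝ) t,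
      ∫⁻ y : EuclideanSpace ℝ (Fin d), ENNReal.ofReal (min 1 (pker d α g s y * z)) with hKp
  -- Tonelli
  have tonelli : (∫⁻ s in Set.Ioc (0:ℝ) t, ∫⁻ y : EuclideanSpace ℝ (Fin d),
      ∫⁻ z in Set.Ioi (0:ℝ), ENNReal.ofReal (min 1 (pker d α g s y * z)) ∂lam)
      = ∫⁻ z in Set.Ioi (0:ℝ), Kp z ∂lam := by
    have stepA : (∫⁻ s in Set.Ioc (0:ℝ) t, ∫⁻ y : EuclideanSpace ℝ (Fin d),
        ∫⁻ z in Set.Ioi (0:ℝ), ENNReal.ofReal (min 1 (pker d α g s y * z)) ∂lam)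
        = ∫⁻ s in Set.Ioc (0:ℝ) t, ∫⁻ z in Set.Ioi (0:ℝ),
            (∫⁻ y : EuclideanSpace ℝ (Fin d), qf s y z) ∂lam := by
      refine setLIntegral_congr_fun measurableSet_Ioc
        (fun s hs => ?_)
      calc (∫⁻ y : EuclideanSpace ℝ (Fin d),
            ∫⁻ z in Set.Ioi (0:ℝ), ENNReal.ofReal (min 1 (pker d α g s y * z)) ∂lam)
          = ∫⁻ y : EuclideanSpace ℝ (Fin d), ∫⁻ z in Set.Ioi (0:ℝ), qf s y z ∂lam :=
            lintegral_congr fun y => lintegral_congr fun z => hpq s hs.1 y z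
        _ = ∫⁻ z in Set.Ioi (0:ℝ), (∫⁻ y : EuclideanSpace ℝ (Fin d), qf s y z) ∂lam :=
            lintegral_lintegral_swap ((hq_meas_s s).aemeasurable)
    have stepB : (∫⁻ s in Set.Ioc (0:ℝ) t, ∫⁻ z in Set.Ioi (0:ℝ),
        (∫⁻ y : EuclideanSpace ℝ (Fin d), qf s y z) ∂lam)
        = ∫⁻ z in Set.Ioi (0:ℝ), (∫⁻ s in Set.Ioc (0:ℝ) t,
            ∫⁻ y : EuclideanSpace ℝ (Fin d), qf s y z) ∂lam := by
      refine lintegral_lintegral_swap (μ := volume.restrict (Set.Ioc (0:ℝ) t))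
        (ν := lam.restrict (Set.Ioi (0:ℝ)))
        (f := fun (s z : ℝ) => ∫⁻ y : EuclideanSpace ℝ (Fin d), qf s y z) ?_
      exact (Measurable.lintegral_prod_right' (f := fun p : (ℝ × ℝ) × EuclideanSpace ℝ (Fin d)
        => qf p.1.1 p.2 p.1.2) hq_meas).aemeasurable
    have stepC : (∫⁻ z in Set.Ioi (0:ℝ), (∫⁻ s in Set.Ioc (0:ℝ) t,
        ∫⁻ y : EuclideanSpace ℝ (Fin d), qf s y z) ∂lam)
        = ∫⁻ z in Set.Ioi (0:ℝ), Kp z ∂lam := by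
      have hz : ∀ z : ℝ, (∫⁻ s in Set.Ioc (0:ℝ) t,
          ∫⁻ y : EuclideanSpace ℝ (Fin d), qf s y z) = Kp z := by
        intro z
        rw [hKp]
        refine setLIntegral_congr_fun measurableSet_Ioc
          (fun s hs => ?_)
        exact lintegral_congr fun y => (hpq s hs.1 y z).symm
      exact lintegral_congr hz
    exact stepA.trans (stepB.trans stepC)
  -- upper bound for all z ≥ 0 (used on (0,1])
  have hInner_up1 : ∀ s ∈ Set.Ioc (0:ℝ) t, ∀ z : ℝ, 0 ≤ z →
      (∫⁻ y : EuclideanSpace ℝ (Fin d), ENNReal.ofReal (min 1 (pker d α g s y * z)))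
        ≤ ENNReal.ofReal z := by
    intro s hs z hz
    calc (∫⁻ y : EuclideanSpace ℝ (Fin d), ENNReal.ofReal (min 1 (pker d α g s y * z)))
        ≤ ∫⁻ y : EuclideanSpace ℝ (Fin d), ENNReal.ofReal (pker d α g s y) *
            ENNReal.ofReal z := by
          refine lintegral_mono fun y => ?_
          rw [← ENNReal.ofReal_mul (hp_pos s hs.1 y).le]
          exact ENNReal.ofReal_le_ofReal (min_le_right _ _)
      _ = (∫⁻ y : EuclideanSpace ℝ (Fin d), ENNReal.ofReal (pker d α g s y)) *
            ENNReal.ofReal z := lintegral_mul_const' _ _ ENNReal.ofReal_ne_top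
      _ = 1 * ENNReal.ofReal z := by rw [hnorm s hs.1]
      _ = ENNReal.ofReal z := one_mul _
  have hB1 : ∀ z : ℝ, 0 ≤ z → Kp z ≤ ENNReal.ofReal t * ENNReal.ofReal z := by
    intro z hz
    calc Kp z ≤ ∫⁻ _ in Set.Ioc (0:ℝ) t, ENNReal.ofReal z :=
          setLIntegral_mono' measurableSet_Ioc (fun s hs => hInner_up1 s hs z hz)
      _ = ENNReal.ofReal z * volume (Set.Ioc (0:ℝ) t) := setLIntegral_const _ _
      _ = ENNReal.ofReal t * ENNReal.ofReal z := by
          rw [Real.volume_Ioc, sub_zero, mul_comm]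
  -- upper bound of order z^β
  have hae0 : ∀ᵐ y : EuclideanSpace ℝ (Fin d) ∂volume, y ≠ 0 := by
    have hs0 : {y : EuclideanSpace ℝ (Fin d) | ¬ y ≠ 0} = {0} := by
      ext y; simp
    rw [ae_iff, hs0]
    exact measure_singleton 0
  have hInner_up2 : ∀ s ∈ Set.Ioc (0:ℝ) t, ∀ z : ℝ, 0 < z →
      (∫⁻ y : EuclideanSpace ℝ (Fin d), ENNReal.ofReal (min 1 (pker d α g s y * z)))
        ≤ ENNReal.ofReal ((C*t*z) ^ β) * (Iβ * v) := by
    intro s hs z hz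
    have hM : 0 < C * s * z := mul_pos (mul_pos hC0 hs.1) hz
    calc (∫⁻ y : EuclideanSpace ℝ (Fin d), ENNReal.ofReal (min 1 (pker d α g s y * z)))
        ≤ ∫⁻ y : EuclideanSpace ℝ (Fin d),
            ENNReal.ofReal (min 1 ((C*s*z) * ‖y‖ ^ (-γ))) := by
          refine lintegral_mono_ae ?_
          filter_upwards [hae0] with y hy
          refine ENNReal.ofReal_le_ofReal (min_le_min le_rfl ?_)
          calc pker d α g s y * z ≤ (C * s * ‖y‖ ^ (-γ)) * z :=
                mul_le_mul_of_nonneg_right (hp_upper s hs.1 y hy) hz.le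
            _ = (C*s*z) * ‖y‖ ^ (-γ) := by ring
      _ ≤ ENNReal.ofReal ((C*s*z) ^ β) * (Iβ * v) := aux_layercake d hd γ hdγ _ hM
      _ ≤ ENNReal.ofReal ((C*t*z) ^ β) * (Iβ * v) := by
          refine mul_le_mul_left (ENNReal.ofReal_le_ofReal
            (Real.rpow_le_rpow hM.le ?_ hβ0.le)) _
          exact mul_le_mul_of_nonneg_right
            (mul_le_mul_of_nonneg_left hs.2 hC0.le) hz.le
  set upc : ℝ≥0∞ := ENNReal.ofReal ((C*t) ^ β) * (Iβ * v) * ENNReal.ofReal t with hupc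
  have hupct : upc < ⊤ :=
    ENNReal.mul_lt_top (ENNReal.mul_lt_top ENNReal.ofReal_lt_top
      (ENNReal.mul_lt_top hIβt.lt_top hvt.lt_top)) ENNReal.ofReal_lt_top
  have hB2 : ∀ z : ℝ, 0 < z → Kp z ≤ upc * ENNReal.ofReal (z ^ β) := by
    intro z hz
    calc Kp z ≤ ∫⁻ _ in Set.Ioc (0:ℝ) t, ENNReal.ofReal ((C*t*z) ^ β) * (Iβ * v) :=
          setLIntegral_mono' measurableSet_Ioc (fun s hs => hInner_up2 s hs z hz)
      _ = (ENNReal.ofReal ((C*t*z) ^ β) * (Iβ * v)) * ENNReal.ofReal t := by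
          rw [setLIntegral_const, Real.volume_Ioc, sub_zero]
      _ = upc * ENNReal.ofReal (z ^ β) := by
          rw [hupc, show C*t*z = (C*t)*z by ring,
            Real.mul_rpow (mul_pos hC0 ht).le hz.le,
            ENNReal.ofReal_mul (Real.rpow_nonneg (mul_pos hC0 ht).le _)]
          ring
  -- lower bound of order z^β for z ≥ 1
  set s₀ : ℝ := min t (c ^ (α / (d:ℝ))) with hs₀def
  have hs₀0 : 0 < s₀ := lt_min ht (Real.rpow_pos_of_pos hc0 _)
  have hs₀t : s₀ ≤ t := min_le_left _ _
  have hInner_low : ∀ z : ℝ, 1 ≤ z → ∀ s ∈ Set.Ioc (s₀/2) s₀,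
      ENNReal.ofReal ((c*(s₀/2)*z) ^ β) * v ≤
        ∫⁻ y : EuclideanSpace ℝ (Fin d), ENNReal.ofReal (min 1 (pker d α g s y * z)) := by
    intro z hz1 s hs
    have hz0 : (0:ℝ) < z := lt_of_lt_of_le one_pos hz1
    have hs0 : 0 < s := lt_trans (half_pos hs₀0) hs.1
    have hcz : 0 < c * z := mul_pos hc0 hz0
    have hczs : 0 < c * z * s := mul_pos hcz hs0
    set r0 : ℝ := (c*z*s) ^ ((1:ℝ)/γ) with hr0
    have hr00 : 0 ≤ r0 := Real.rpow_nonneg hczs.le _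
    have hr0d : (r0 : ℝ) ^ (d:ℕ) = (c*z*s) ^ β := by
      rw [hr0, ← Real.rpow_natCast ((c*z*s) ^ ((1:ℝ)/γ)) d, ← Real.rpow_mul hczs.le]
      congr 1
      rw [hβdef, one_div, inv_mul_eq_div]
    have hkey : ∀ y : EuclideanSpace ℝ (Fin d), y ≠ 0 → ‖y‖ < r0 →
        (1:ℝ≥0∞) ≤ ENNReal.ofReal (min 1 (pker d α g s y * z)) := by
      intro y hy hyr
      have hny : 0 < ‖y‖ := norm_pos_iff.mpr hy
      have h2 : r0 ^ (-γ) ≤ ‖y‖ ^ (-γ) :=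
        Real.rpow_le_rpow_of_nonpos hny hyr.le (by linarith)
      have h3 : r0 ^ (-γ) = (c*z*s)⁻¹ := by
        rw [hr0, ← Real.rpow_mul hczs.le, show ((1:ℝ)/γ)*(-γ) = -1 by rw [mul_neg, one_div, inv_mul_cancel₀ hγ0.ne'],
          Real.rpow_neg_one]
      have hc1 : (c*z)⁻¹ ≤ s * ‖y‖ ^ (-γ) := by
        calc (c*z)⁻¹ = s * (c*z*s)⁻¹ := by field_simp
          _ ≤ s * ‖y‖ ^ (-γ) := by
              rw [← h3]; exact mul_le_mul_of_nonneg_left h2 hs0.le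
      have hc2 : (c*z)⁻¹ ≤ s ^ (-((d:ℝ)/α)) := by
        have h5 : s ≤ (c*z) ^ (α/(d:ℝ)) :=
          le_trans hs.2 (le_trans (min_le_right _ _)
            (Real.rpow_le_rpow hc0.le (le_mul_of_one_le_right hc0.le hz1)
              (div_nonneg hα0.le hd0.le)))
        have h4 : s ^ ((d:ℝ)/α) ≤ c*z := by
          calc s ^ ((d:ℝ)/α) ≤ ((c*z) ^ (α/(d:ℝ))) ^ ((d:ℝ)/α) :=
                Real.rpow_le_rpow hs0.le h5 (div_nonneg hd0.le hα0.le)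
            _ = c*z := by
                rw [← Real.rpow_mul hcz.le,
                  show (α/(d:ℝ))*((d:ℝ)/α) = 1 by rw [div_mul_div_comm, mul_comm α (d:ℝ)]; exact div_self (mul_pos hd0 hα0).ne', Real.rpow_one]
        rw [Real.rpow_neg hs0.le]
        exact inv_anti₀ (Real.rpow_pos_of_pos hs0 _) h4
      have h6 : (c*z)⁻¹ ≤ min (s ^ (-((d:ℝ)/α))) (s * ‖y‖ ^ (-γ)) := le_min hc2 hc1
      have h7 : c * (c*z)⁻¹ ≤ pker d α g s y :=
        le_trans (mul_le_mul_of_nonneg_left h6 hc0.le) (hp_lower s hs0 y hy)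
      have h8 : c * (c*z)⁻¹ = z⁻¹ := by
        rw [mul_inv, ← mul_assoc, mul_inv_cancel₀ hc0.ne', one_mul]
      have h1 : (1:ℝ) ≤ pker d α g s y * z := by
        calc (1:ℝ) = z⁻¹ * z := (inv_mul_cancel₀ hz0.ne').symm
          _ ≤ pker d α g s y * z :=
              mul_le_mul_of_nonneg_right (h8 ▸ h7) hz0.le
      rw [min_eq_left h1, ENNReal.ofReal_one]
    calc ENNReal.ofReal ((c*(s₀/2)*z) ^ β) * v
        ≤ ENNReal.ofReal ((c*z*s) ^ β) * v := by
          refine mul_le_mul_left (ENNReal.ofReal_le_ofReal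
            (Real.rpow_le_rpow (by positivity) ?_ hβ0.le)) _
          calc c*(s₀/2)*z = (c*z)*(s₀/2) := by ring
            _ ≤ (c*z)*s := mul_le_mul_of_nonneg_left hs.1.le hcz.le
            _ = c*z*s := rfl
      _ = ENNReal.ofReal (r0 ^ (d:ℕ)) * v := by rw [hr0d]
      _ ≤ ∫⁻ y : EuclideanSpace ℝ (Fin d), ENNReal.ofReal (min 1 (pker d α g s y * z)) :=
          aux_ball_lower d hd r0 hr00 _ hkey
  set lowc : ℝ≥0∞ := ENNReal.ofReal ((c*(s₀/2)) ^ β) * v * ENNReal.ofReal (s₀/2) with hlowc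
  have hlowc0 : lowc ≠ 0 := by
    refine mul_ne_zero (mul_ne_zero ?_ hv0) ?_
    · exact (ENNReal.ofReal_pos.mpr (Real.rpow_pos_of_pos
        (mul_pos hc0 (half_pos hs₀0)) _)).ne'
    · exact (ENNReal.ofReal_pos.mpr (half_pos hs₀0)).ne'
  have hlowct : lowc ≠ ⊤ :=
    ENNReal.mul_ne_top (ENNReal.mul_ne_top ENNReal.ofReal_ne_top hvt) ENNReal.ofReal_ne_top
  have hB3 : ∀ z : ℝ, 1 ≤ z → lowc * ENNReal.ofReal (z ^ β) ≤ Kp z := by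
    intro z hz1
    have hz0 : (0:ℝ) < z := lt_of_lt_of_le one_pos hz1
    calc lowc * ENNReal.ofReal (z ^ β)
        = (ENNReal.ofReal ((c*(s₀/2)*z) ^ β) * v) * ENNReal.ofReal (s₀ - s₀/2) := by
          rw [hlowc, show c*(s₀/2)*z = (c*(s₀/2))*z by ring,
            Real.mul_rpow (mul_pos hc0 (half_pos hs₀0)).le hz0.le,
            ENNReal.ofReal_mul (Real.rpow_nonneg (mul_pos hc0 (half_pos hs₀0)).le _),
            show s₀ - s₀/2 = s₀/2 by ring]
          ring
      _ = ∫⁻ _ in Set.Ioc (s₀/2) s₀, (ENNReal.ofReal ((c*(s₀/2)*z) ^ β) * v) := by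
          rw [setLIntegral_const, Real.volume_Ioc]
      _ ≤ ∫⁻ s in Set.Ioc (s₀/2) s₀,
            ∫⁻ y : EuclideanSpace ℝ (Fin d), ENNReal.ofReal (min 1 (pker d α g s y * z)) :=
          setLIntegral_mono' measurableSet_Ioc (fun s hs => hInner_low z hz1 s hs)
      _ ≤ Kp z := lintegral_mono_set
          (fun s hs => ⟨lt_trans (half_pos hs₀0) hs.1, le_trans hs.2 hs₀t⟩)
  have hB4 : ∀ z ∈ Set.Ioc (0:ℝ) 1, lowc * ENNReal.ofReal z ≤ Kp z := by
    intro z hz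
    have hKp1 : lowc ≤ Kp 1 := by
      have := hB3 1 le_rfl
      simpa [Real.one_rpow] using this
    have hstep : ENNReal.ofReal z * Kp 1 ≤ Kp z := by
      calc ENNReal.ofReal z * Kp 1
          = ∫⁻ s in Set.Ioc (0:ℝ) t, ENNReal.ofReal z *
              ∫⁻ y : EuclideanSpace ℝ (Fin d),
                ENNReal.ofReal (min 1 (pker d α g s y * 1)) :=
            (lintegral_const_mul' _ _ ENNReal.ofReal_ne_top).symm
        _ = ∫⁻ s in Set.Ioc (0:ℝ) t, ∫⁻ y : EuclideanSpace ℝ (Fin d),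
              ENNReal.ofReal z * ENNReal.ofReal (min 1 (pker d α g s y * 1)) := by
            refine lintegral_congr fun s => ?_
            exact (lintegral_const_mul' _ _ ENNReal.ofReal_ne_top).symm
        _ ≤ Kp z := by
            refine setLIntegral_mono' measurableSet_Ioc (fun s hs => ?_)
            refine lintegral_mono fun y => ?_
            rw [mul_one, ← ENNReal.ofReal_mul hz.1.le]
            refine ENNReal.ofReal_le_ofReal ?_
            rw [mul_min_of_nonneg _ _ hz.1.le, mul_one]
            exact min_le_min hz.2 (le_of_eq (mul_comm z _))
    calc lowc * ENNReal.ofReal z = ENNReal.ofReal z * lowc := mul_comm _ _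
      _ ≤ ENNReal.ofReal z * Kp 1 := mul_le_mul_right hKp1 _
      _ ≤ Kp z := hstep
  -- assembly
  rw [tonelli, ← Set.Ioc_union_Ioi_eq_Ioi (zero_le_one (α := ℝ)),
    lintegral_union measurableSet_Ioi (Set.Ioc_disjoint_Ioi le_rfl),
    ENNReal.add_lt_top]
  constructor
  · rintro ⟨h1, h2⟩
    constructor
    · have hle : lowc * (∫⁻ z in Set.Ioc (0:ℝ) 1, ENNReal.ofReal z ∂lam)
          ≤ ∫⁻ z in Set.Ioc (0:ℝ) 1, Kp z ∂lam := by
        calc lowc * (∫⁻ z in Set.Ioc (0:ℝ) 1, ENNReal.ofReal z ∂lam)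
            = ∫⁻ z in Set.Ioc (0:ℝ) 1, lowc * ENNReal.ofReal z ∂lam :=
              (lintegral_const_mul' _ _ hlowct).symm
          _ ≤ ∫⁻ z in Set.Ioc (0:ℝ) 1, Kp z ∂lam :=
              setLIntegral_mono' measurableSet_Ioc (fun z hz => hB4 z hz)
      by_contra hP
      have hPtop : (∫⁻ z in Set.Ioc (0:ℝ) 1, ENNReal.ofReal z ∂lam) = ⊤ := by
        simpa [lt_top_iff_ne_top] using hP
      rw [hPtop, ENNReal.mul_top hlowc0] at hle
      exact h1.ne (top_le_iff.mp hle)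
    · have hle : lowc * (∫⁻ z in Set.Ioi (1:ℝ), ENNReal.ofReal (z ^ β) ∂lam)
          ≤ ∫⁻ z in Set.Ioi (1:ℝ), Kp z ∂lam := by
        calc lowc * (∫⁻ z in Set.Ioi (1:ℝ), ENNReal.ofReal (z ^ β) ∂lam)
            = ∫⁻ z in Set.Ioi (1:ℝ), lowc * ENNReal.ofReal (z ^ β) ∂lam :=
              (lintegral_const_mul' _ _ hlowct).symm
          _ ≤ ∫⁻ z in Set.Ioi (1:ℝ), Kp z ∂lam :=
              setLIntegral_mono' measurableSet_Ioi (fun z hz => hB3 z (le_of_lt hz))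
      by_contra hP
      have hPtop : (∫⁻ z in Set.Ioi (1:ℝ), ENNReal.ofReal (z ^ β) ∂lam) = ⊤ := by
        simpa [lt_top_iff_ne_top] using hP
      rw [hPtop, ENNReal.mul_top hlowc0] at hle
      exact h2.ne (top_le_iff.mp hle)
  · rintro ⟨hP1, hP2⟩
    constructor
    · calc (∫⁻ z in Set.Ioc (0:ℝ) 1, Kp z ∂lam)
          ≤ ∫⁻ z in Set.Ioc (0:ℝ) 1, ENNReal.ofReal t * ENNReal.ofReal z ∂lam :=
            setLIntegral_mono (measurable_const.mul measurable_id.ennreal_ofReal)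
              (fun z hz => hB1 z hz.1.le)
        _ = ENNReal.ofReal t * ∫⁻ z in Set.Ioc (0:ℝ) 1, ENNReal.ofReal z ∂lam :=
            lintegral_const_mul' _ _ ENNReal.ofReal_ne_top
        _ < ⊤ := ENNReal.mul_lt_top ENNReal.ofReal_lt_top hP1
    · calc (∫⁻ z in Set.Ioi (1:ℝ), Kp z ∂lam)
          ≤ ∫⁻ z in Set.Ioi (1:ℝ), upc * ENNReal.ofReal (z ^ β) ∂lam :=
            setLIntegral_mono (measurable_const.mul
              ((Real.continuous_rpow_const hβ0.le).measurable.ennreal_ofReal))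
              (fun z hz => hB2 z (lt_trans one_pos hz))
        _ = upc * ∫⁻ z in Set.Ioi (1:ℝ), ENNReal.ofReal (z ^ β) ∂lam :=
            lintegral_const_mul' _ _ hupct.ne
        _ < ⊤ := ENNReal.mul_lt_top hupct hP2
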